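/- If ω₁₁, ω₁₃, ω₃₃ are complex numbers with |ω₁₁| ≤ 1, |ω₁₃|² ≤ (1 − |ω₁₁|²)/3, |ω₃₃| ≤ 1/3, and |2ω₁₃ − ω₁₁²| ≤ 1, and if a₂ = 2ω₁₁, a₃ = 2ω₁₃ + 3ω₁₁², a₄ = 2ω₃₃ + 8ω₁₁ω₁₃ + (10/3)ω₁₁³, then |a₂a₄ − a₃²| ≤ 11/3. -/

import Mathlib

theorem H22_bound (ω11 ω13 ω33 : ℂ)
    (h1 : ‖ω11‖ ≤ 1)
    (h2 : ‖ω13‖^2 ≤ (1 - ‖ω11‖^2)/3)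
    (h3 : ‖ω33‖ ≤ 1/3)
    (h4 : ‖2*ω13 - ω11^2‖ ≤ 1)
    (a2 a3 a4 : ℂ)
    (ha2 : a2 = 2*ω11)
    (ha3 : a3 = 2*ω13 + 3*ω11^2)
    (ha4 : a4 = 2*ω33 + 8*ω11*ω13 + (10/3)*ω11^3) :
    ‖a2*a4 - a3^2‖ ≤ 11/3 := by
  have key : a2*a4 - a3^2
      = 4*(ω11*ω33) - ((2*ω13 - ω11^2)^2 + (4/3)*ω11^4) := by
    subst ha2 ha3 ha4; ring
  rw [key]
  calc ‖4*(ω11*ω33) - ((2*ω13 - ω11^2)^2 + (4/3)*ω11^4)‖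
      ≤ ‖4*(ω11*ω33)‖ + ‖(2*ω13 - ω11^2)^2 + (4/3)*ω11^4‖ := by
        exact norm_sub_le _ _
    _ ≤ ‖4*(ω11*ω33)‖ + (‖(2*ω13 - ω11^2)^2‖ + ‖(4/3)*ω11^4‖) := by
        gcongr; exact norm_add_le _ _
    _ ≤ 4/3 + (1 + 4/3) := by
        gcongr ?_ + (?_ + ?_)
        · rw [norm_mul, norm_mul]
          have : ‖(4:ℂ)‖ = 4 := by norm_num
          rw [this]
          calc 4 * (‖ω11‖ * ‖ω33‖) ≤ 4 * (1 * (1/3)) := by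
                gcongr <;> positivity
            _ = 4/3 := by norm_num
        · rw [norm_pow]
          calc ‖2*ω13 - ω11^2‖^2 ≤ 1^2 := by gcongr
            _ = 1 := one_pow 2
        · rw [norm_mul, norm_pow]
          have h43 : ‖(4:ℂ)/3‖ = 4/3 := by
            simp [norm_div]
          rw [h43]
          calc (4/3) * ‖ω11‖ ^ 4 ≤ (4/3) * 1^4 := by gcongr
            _ = 4/3 := by norm_num
    _ = 11/3 := by norm_num
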